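/- Let M be a free ℂ[t]-module of finite rank with a symmetric ℂ[t]-bilinear form whose determinant D ∈ ℂ[t] (with respect to some basis) is nonzero. Define Mⁱ = {m ∈ M : (m, M) ⊆ tⁱℂ[t]} and let M̄ⁱ be the image of Mⁱ in M̄ = M/tM. Then ∑_{i>0} dim_ℂ M̄ⁱ = ord_t(D). -/

import Mathlib

open Polynomial

lemma aux_count {k : ℕ} (N : ℕ) (v : Fin k → ℕ) (hv : ∀ j, v j < N) :
    ∑ i ∈ Finset.range N, (Finset.univ.filter fun j => i + 1 ≤ v j).card = ∑ j, v j := by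
  classical
  have h1 : ∀ i, (Finset.univ.filter fun j : Fin k => i + 1 ≤ v j).card
      = ∑ j : Fin k, if i + 1 ≤ v j then 1 else 0 := by
    intro i; rw [Finset.card_filter]
  simp_rw [h1]
  rw [Finset.sum_comm]
  refine Finset.sum_congr rfl fun j _ => ?_
  have h2 : ∀ i, (if i + 1 ≤ v j then 1 else 0) = (if i ∈ Finset.range (v j) then 1 else 0) := by
    intro i
    simp [Finset.mem_range, Nat.add_one_le_iff]
  simp_rw [h2]
  rw [Finset.sum_ite_mem, Finset.inter_comm]
  have h3 : Finset.range (v j) ∩ Finset.range N = Finset.range (v j) := by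
    ext x
    simp only [Finset.mem_inter, Finset.mem_range]
    have := hv j
    omega
  rw [h3]
  simp

lemma aux_rm_prod {ι : Type*} (s : Finset ι) (g : ι → Polynomial ℂ) (h : ∀ i ∈ s, g i ≠ 0) :
    (∏ i ∈ s, g i).rootMultiplicity 0 = ∑ i ∈ s, (g i).rootMultiplicity 0 := by
  classical
  induction s using Finset.cons_induction with
  | empty =>
    simp only [Finset.prod_empty, Finset.sum_empty]
    exact Polynomial.rootMultiplicity_eq_zero (show ¬(1 : Polynomial ℂ).IsRoot 0 by
      simp [Polynomial.IsRoot])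
  | cons a s ha ih =>
    rw [Finset.prod_cons, Finset.sum_cons,
      Polynomial.rootMultiplicity_mul (mul_ne_zero (h a (Finset.mem_cons_self a s))
        (Finset.prod_ne_zero_iff.mpr fun i hi => h i (Finset.mem_cons_of_mem hi))),
      ih fun i hi => h i (Finset.mem_cons_of_mem hi)]

lemma aux_rm_unit {u w : Polynomial ℂ} (h : u * w = 1) : u.rootMultiplicity 0 = 0 := by
  apply Polynomial.rootMultiplicity_eq_zero
  intro hr
  have h2 := congrArg (Polynomial.eval 0) h
  simp only [Polynomial.eval_mul, Polynomial.eval_one] at h2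
  rw [Polynomial.IsRoot.def] at hr
  rw [hr, zero_mul] at h2
  exact zero_ne_one h2

lemma aux_X_pow_dvd_iff {p : Polynomial ℂ} (hp : p ≠ 0) (s : ℕ) :
    X ^ s ∣ p ↔ s ≤ p.rootMultiplicity 0 := by
  rw [Polynomial.le_rootMultiplicity_iff hp, map_zero, sub_zero]

lemma aux_span_single {k : ℕ} (S : Finset (Fin k)) :
    Module.finrank ℂ (Submodule.span ℂ
      (Set.range fun j : S => (Pi.single (j : Fin k) (1 : ℂ) : Fin k → ℂ))) = S.card := by
  classical
  have h1 : LinearIndependent ℂ (fun j : Fin k => (Pi.single j (1 : ℂ) : Fin k → ℂ)) := by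
    have h0 := (Pi.basisFun ℂ (Fin k)).linearIndependent
    have he : ⇑(Pi.basisFun ℂ (Fin k)) = fun j : Fin k => (Pi.single j (1 : ℂ) : Fin k → ℂ) :=
      funext fun i => Pi.basisFun_apply (R := ℂ) (η := Fin k) i
    rwa [he] at h0
  have h2 : LinearIndependent ℂ (fun j : S => (Pi.single (j : Fin k) (1 : ℂ) : Fin k → ℂ)) :=
    h1.comp _ Subtype.val_injective
  rw [finrank_span_eq_card h2, Fintype.card_coe]

/-- The `i`-th step of the Jantzen filtration:
`Mⁱ = {m ∈ M : (m, M) ⊆ tⁱℂ[t]}`. -/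
def jantzenStep {M : Type*} [AddCommGroup M] [Module (Polynomial ℂ) M]
    (B : M →ₗ[Polynomial ℂ] M →ₗ[Polynomial ℂ] Polynomial ℂ) (i : ℕ) :
    Submodule (Polynomial ℂ) M where
  carrier := {m : M | ∀ m' : M, X ^ i ∣ B m m'}
  add_mem' := by
    intro x y hx hy m'
    rw [map_add, LinearMap.add_apply]
    exact dvd_add (hx m') (hy m')
  zero_mem' := by intro m'; simp
  smul_mem' := by
    intro c x hx m'
    rw [map_smul, LinearMap.smul_apply, smul_eq_mul]
    exact Dvd.dvd.mul_left (hx m') c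

lemma mem_jantzenStep {M : Type*} [AddCommGroup M] [Module (Polynomial ℂ) M]
    (B : M →ₗ[Polynomial ℂ] M →ₗ[Polynomial ℂ] Polynomial ℂ) (i : ℕ) (m : M) :
    m ∈ jantzenStep B i ↔ ∀ m' : M, X ^ i ∣ B m m' := Iff.rfl

set_option maxHeartbeats 1000000 in
/-- abstract Jantzen filtration lemma: Let `M` be a free `ℂ[t]`-module of
finite rank with a symmetric bilinear form whose Gram determinant `D` with respect to a
basis is nonzero.  With `Mⁱ = {m : (m, M) ⊆ tⁱℂ[t]}` and `M̄ⁱ` the image of `Mⁱ` in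
`M̄ = M/tM`, one has `∑_{i>0} dim_ℂ M̄ⁱ = ord_t(D)`. -/
theorem jantzen_filtration_sum_eq_ord
    {M : Type*} [AddCommGroup M] [Module (Polynomial ℂ) M]
    [Module ℂ M] [IsScalarTower ℂ (Polynomial ℂ) M]
    (n : ℕ) (b : Module.Basis (Fin n) (Polynomial ℂ) M)
    (B : M →ₗ[Polynomial ℂ] M →ₗ[Polynomial ℂ] Polynomial ℂ)
    (hsymm : ∀ x y : M, B x y = B y x)
    (D : Polynomial ℂ)
    (hD : D = Matrix.det (Matrix.of fun i j : Fin n => B (b i) (b j)))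
    (hD0 : D ≠ 0)
    (tM : Submodule (Polynomial ℂ) M)
    (htM : tM = Submodule.span (Polynomial ℂ) {m : M | ∃ x : M, m = (X : Polynomial ℂ) • x}) :
    ∑ᶠ i : ℕ, Module.finrank ℂ (Submodule.map tM.mkQ (jantzenStep B (i + 1)))
      = D.rootMultiplicity 0 := by
  classical
  -- the Gram matrix
  have hA : LinearMap.toMatrix b b.dualBasis B = Matrix.of fun i j : Fin n => B (b i) (b j) := by
    refine Matrix.ext fun i j => ?_
    rw [LinearMap.toMatrix_apply, Module.Basis.dualBasis_repr, Matrix.of_apply]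
    exact hsymm (b j) (b i)
  -- injectivity of B : M → Dual M
  have hBinj : Function.Injective B := by
    have hdetA : (LinearMap.toMatrix b b.dualBasis B).det = D := by rw [hA, ← hD]
    rw [← LinearMap.ker_eq_bot, Submodule.eq_bot_iff]
    intro m hm
    rw [LinearMap.mem_ker] at hm
    have h0 : (LinearMap.toMatrix b b.dualBasis B).mulVec (b.repr m) = 0 := by
      rw [LinearMap.toMatrix_mulVec_repr, hm]
      simp
    have h1 : ∀ j, D * b.repr m j = 0 := by
      intro j
      have h2 := congrFun (congrArg
        (fun w => ((LinearMap.toMatrix b b.dualBasis B).adjugate).mulVec w) h0) j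
      simp only [Matrix.mulVec_mulVec, Matrix.adjugate_mul, Matrix.mulVec_zero] at h2
      rw [Matrix.smul_mulVec, Matrix.one_mulVec, hdetA] at h2
      exact h2
    have h3 : b.repr m = 0 := Finsupp.ext fun j => by
      rcases mul_eq_zero.mp (h1 j) with h | h
      · exact absurd h hD0
      · exact h
    exact (LinearEquiv.map_eq_zero_iff b.repr).mp h3
  -- Smith normal form of the range of B inside the dual module
  let eN : M ≃ₗ[Polynomial ℂ] LinearMap.range B := LinearEquiv.ofInjective B hBinj
  obtain ⟨k, snf⟩ := (LinearMap.range B).smithNormalForm b.dualBasis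
  have hkn : k = n := by
    have hcard := Fintype.card_congr (Module.Basis.indexEquiv (snf.bN.map eN.symm) b)
    simpa using hcard
  subst hkn
  let e : Module.Basis (Fin k) (Polynomial ℂ) M := snf.bN.map eN.symm
  have hcoeN : ∀ m : M, ((eN m : Module.Dual (Polynomial ℂ) M)) = B m := fun m =>
    LinearEquiv.ofInjective_apply B m
  have he : ∀ j, B (e j) = snf.a j • snf.bM (snf.f j) := by
    intro j
    have h1 : eN (e j) = snf.bN j := by
      show eN (eN.symm (snf.bN j)) = snf.bN j
      exact eN.apply_symm_apply _
    have h2 : B (e j) = (snf.bN j : Module.Dual (Polynomial ℂ) M) := by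
      rw [← hcoeN (e j), h1]
    rw [h2, snf.snf j]
  have ha : ∀ j, snf.a j ≠ 0 := by
    intro j h0
    have h1 := snf.snf j
    rw [h0, zero_smul] at h1
    exact snf.bN.ne_zero j (Submodule.coe_eq_zero.mp h1)
  -- coordinates of B m with respect to snf.bM
  have hcoord : ∀ (m : M) (j : Fin k),
      snf.bM.repr (B m) (snf.f j) = snf.a j * e.repr m j := by
    intro m j
    have h1 := snf.repr_apply_embedding_eq_repr_smul (m := eN m) (i := j)
    rw [hcoeN] at h1
    rw [h1, map_smul, Finsupp.smul_apply, smul_eq_mul,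
      show snf.bN.repr (eN m) j = e.repr m j from by
        rw [show e = snf.bN.map eN.symm from rfl, Module.Basis.map_repr]; simp]
  -- characterization of the Jantzen filtration steps
  have hchar : ∀ (s : ℕ) (m : M), m ∈ jantzenStep B s ↔ ∀ j, X ^ s ∣ snf.a j * e.repr m j := by
    intro s m
    rw [mem_jantzenStep]
    constructor
    · intro h j
      rw [← hcoord m j]
      have hsum : snf.bM.repr (B m) (snf.f j)
          = ∑ i, B m (b i) * snf.bM.repr (b.dualBasis i) (snf.f j) := by
        conv_lhs => rw [← Module.Basis.sum_repr b.dualBasis (B m)]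
        rw [map_sum, Finsupp.finset_sum_apply]
        refine Finset.sum_congr rfl fun i _ => ?_
        rw [Module.Basis.dualBasis_repr, map_smul, Finsupp.smul_apply, smul_eq_mul]
      rw [hsum]
      exact Finset.dvd_sum fun i _ => (h (b i)).mul_right _
    · intro h m'
      have hrw : B m m' = ∑ i, snf.bM.repr (B m) i * (snf.bM i) m' := by
        conv_lhs => rw [← Module.Basis.sum_repr snf.bM (B m)]
        rw [LinearMap.sum_apply]
        refine Finset.sum_congr rfl fun i _ => ?_
        rw [LinearMap.smul_apply, smul_eq_mul]
      rw [hrw]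
      refine Finset.dvd_sum fun i _ => ?_
      by_cases hi : i ∈ Set.range snf.f
      · obtain ⟨j, rfl⟩ := hi
        rw [hcoord m j]
        exact (h j).mul_right _
      · have h0 : snf.bM.repr (B m) i = 0 := by
          have := snf.repr_eq_zero_of_notMem_range (m := eN m) hi
          rwa [hcoeN] at this
        rw [h0, zero_mul]
        exact dvd_zero _
  -- characterization of tM
  have htMc : ∀ m : M, m ∈ tM ↔ ∀ j, (X : Polynomial ℂ) ∣ e.repr m j := by
    have hset : tM = LinearMap.range (LinearMap.lsmul (Polynomial ℂ) M X) := by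
      rw [htM]
      apply le_antisymm
      · rw [Submodule.span_le]
        rintro _ ⟨x, rfl⟩
        exact ⟨x, rfl⟩
      · rintro _ ⟨x, rfl⟩
        exact Submodule.subset_span ⟨x, rfl⟩
    intro m
    constructor
    · intro hm
      rw [hset] at hm
      obtain ⟨x, rfl⟩ := hm
      intro j
      rw [LinearMap.lsmul_apply, map_smul, Finsupp.smul_apply, smul_eq_mul]
      exact Dvd.intro _ rfl
    · intro h
      rw [hset]
      choose q hq using h
      refine ⟨∑ j, q j • e j, ?_⟩
      rw [LinearMap.lsmul_apply, Finset.smul_sum]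
      calc ∑ j, (X : Polynomial ℂ) • q j • e j = ∑ j, ((X : Polynomial ℂ) * q j) • e j := by
            refine Finset.sum_congr rfl fun j _ => (smul_smul _ _ _)
        _ = ∑ j, e.repr m j • e j := by
            refine Finset.sum_congr rfl fun j _ => ?_
            rw [← hq j]
        _ = m := Module.Basis.sum_repr e m
  -- the evaluation map ψ : M → (Fin k → ℂ)
  let ψ : M →ₗ[ℂ] (Fin k → ℂ) :=
    { toFun := fun m j => (e.repr m j).eval 0
      map_add' := by
        intro x y; funext j
        simp [Pi.add_apply]
      map_smul' := by
        intro c m; funext j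
        have h1 : c • m = (C c) • m := by
          rw [← algebraMap_smul (Polynomial ℂ) c m, Polynomial.algebraMap_eq]
        show (e.repr (c • m) j).eval 0 = c • (e.repr m j).eval 0
        rw [h1, map_smul, Finsupp.smul_apply, smul_eq_mul,
          Polynomial.eval_mul, Polynomial.eval_C, smul_eq_mul] }
  have hψ : ∀ (m : M) (j : Fin k), ψ m j = (e.repr m j).eval 0 := fun _ _ => rfl
  have hkerψ : LinearMap.ker ψ = tM.restrictScalars ℂ := by
    ext m
    rw [LinearMap.mem_ker, Submodule.restrictScalars_mem, htMc]
    constructor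
    · intro h0 j
      have h1 : (e.repr m j).eval 0 = 0 := congrFun h0 j
      rw [Polynomial.X_dvd_iff, Polynomial.coeff_zero_eq_eval_zero]
      exact h1
    · intro h0
      funext j
      have h1 := h0 j
      rw [Polynomial.X_dvd_iff] at h1
      show (e.repr m j).eval 0 = 0
      rw [← Polynomial.coeff_zero_eq_eval_zero]
      exact h1
  -- the per-step dimension count
  have hstep : ∀ s : ℕ, Module.finrank ℂ (Submodule.map tM.mkQ (jantzenStep B s))
      = (Finset.univ.filter fun j => X ^ s ∣ snf.a j).card := by
    intro s
    set S : Finset (Fin k) := Finset.univ.filter (fun j => X ^ s ∣ snf.a j) with hS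
    let qe := Submodule.Quotient.restrictScalarsEquiv ℂ tM
    let ψbar : (M ⧸ tM.restrictScalars ℂ) →ₗ[ℂ] (Fin k → ℂ) :=
      (tM.restrictScalars ℂ).liftQ ψ (le_of_eq hkerψ.symm)
    let Φ : (M ⧸ tM) →ₗ[ℂ] (Fin k → ℂ) := ψbar.comp (qe.symm.toLinearMap)
    have hΦmk : ∀ m : M, Φ (tM.mkQ m) = ψ m := by
      intro m
      show ψbar (qe.symm (tM.mkQ m)) = ψ m
      rw [Submodule.mkQ_apply]
      rw [show qe.symm (Submodule.Quotient.mk m) = Submodule.Quotient.mk m from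
        Submodule.Quotient.restrictScalarsEquiv_symm_mk ℂ tM m]
      exact Submodule.liftQ_apply _ ψ m
    have hΦinj : Function.Injective Φ := by
      have h1 : Function.Injective ψbar := by
        rw [← LinearMap.ker_eq_bot]
        exact Submodule.ker_liftQ_eq_bot _ _ _ (le_of_eq hkerψ)
      exact h1.comp qe.symm.injective
    have himg : Submodule.map Φ ((Submodule.map tM.mkQ (jantzenStep B s)).restrictScalars ℂ)
        = Submodule.map ψ ((jantzenStep B s).restrictScalars ℂ) := by
      apply le_antisymm
      · rintro _ ⟨y, hy, rfl⟩
        obtain ⟨m, hm, rfl⟩ := hy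
        exact ⟨m, hm, hΦmk m⟩
      · rintro _ ⟨m, hm, rfl⟩
        exact ⟨tM.mkQ m, ⟨m, hm, rfl⟩, hΦmk m⟩
    have hsingle : ∀ j : Fin k, ψ (e j) = (Pi.single j (1 : ℂ) : Fin k → ℂ) := by
      intro j
      funext j'
      rw [hψ, Module.Basis.repr_self, Finsupp.single_apply, Pi.single_apply]
      by_cases hjj : j = j'
      · rw [if_pos hjj, if_pos hjj.symm]
        simp
      · rw [if_neg hjj, if_neg (Ne.symm hjj)]
        simp
    have him2 : Submodule.map ψ ((jantzenStep B s).restrictScalars ℂ)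
        = Submodule.span ℂ (Set.range fun j : S => (Pi.single (j : Fin k) (1 : ℂ) : Fin k → ℂ)) := by
      apply le_antisymm
      · rintro _ ⟨m, hm, rfl⟩
        replace hm : ∀ j, X ^ s ∣ snf.a j * e.repr m j := (hchar s m).mp hm
        have hdecomp : ψ m = ∑ j, (ψ m j) • (Pi.single j (1 : ℂ) : Fin k → ℂ) := by
          funext j'
          rw [Finset.sum_apply]
          have : ∀ j, ((ψ m j) • (Pi.single j (1 : ℂ) : Fin k → ℂ)) j'
              = if j' = j then ψ m j else 0 := by
            intro j
            rw [Pi.smul_apply, Pi.single_apply]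
            by_cases hjj : j' = j
            · rw [if_pos hjj, if_pos hjj, smul_eq_mul, mul_one]
            · rw [if_neg hjj, if_neg hjj, smul_eq_mul, mul_zero]
          simp_rw [this]
          rw [Finset.sum_ite_eq (Finset.univ) j' (fun j => ψ m j)]
          simp
        rw [hdecomp]
        apply Submodule.sum_mem
        intro j _
        by_cases hj : X ^ s ∣ snf.a j
        · refine Submodule.smul_mem _ _ (Submodule.subset_span ⟨⟨j, ?_⟩, rfl⟩)
          rw [hS, Finset.mem_filter]
          exact ⟨Finset.mem_univ j, hj⟩
        · have hz : ψ m j = 0 := by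
            rw [hψ]
            have hd := hm j
            by_cases hc : e.repr m j = 0
            · rw [hc]; simp
            · have hne : snf.a j * e.repr m j ≠ 0 := mul_ne_zero (ha j) hc
              rw [aux_X_pow_dvd_iff hne, Polynomial.rootMultiplicity_mul hne] at hd
              have hlt : (snf.a j).rootMultiplicity 0 < s := by
                by_contra hge
                push_neg at hge
                exact hj ((aux_X_pow_dvd_iff (ha j) s).mpr hge)
              have h1 : 1 ≤ (e.repr m j).rootMultiplicity 0 := by omega
              have h2 := (aux_X_pow_dvd_iff hc 1).mpr h1
              rw [pow_one, Polynomial.X_dvd_iff] at h2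
              rw [← Polynomial.coeff_zero_eq_eval_zero]
              exact h2
          rw [hz, zero_smul]
          exact Submodule.zero_mem _
      · rw [Submodule.span_le]
        rintro _ ⟨⟨j, hjS⟩, rfl⟩
        rw [hS, Finset.mem_filter] at hjS
        refine ⟨e j, (hchar s (e j)).mpr fun j' => ?_, hsingle j⟩
        rw [Module.Basis.repr_self, Finsupp.single_apply]
        by_cases hjj : j = j'
        · rw [if_pos hjj, mul_one]
          exact hjj ▸ hjS.2
        · rw [if_neg hjj, mul_zero]
          exact dvd_zero _
    calc Module.finrank ℂ (Submodule.map tM.mkQ (jantzenStep B s))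
        = Module.finrank ℂ ((Submodule.map tM.mkQ (jantzenStep B s)).restrictScalars ℂ) :=
          (LinearEquiv.finrank_eq ((Submodule.restrictScalarsEquiv ℂ (Polynomial ℂ) (M ⧸ tM)
            (Submodule.map tM.mkQ (jantzenStep B s))).restrictScalars ℂ)).symm
      _ = Module.finrank ℂ (Submodule.map Φ
            ((Submodule.map tM.mkQ (jantzenStep B s)).restrictScalars ℂ)) :=
          LinearEquiv.finrank_eq (Submodule.equivMapOfInjective Φ hΦinj _)
      _ = S.card := by rw [himg, him2]; exact aux_span_single S
  -- root multiplicity of D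
  have hrmD : D.rootMultiplicity 0 = ∑ j, (snf.a j).rootMultiplicity 0 := by
    have hdetA : (LinearMap.toMatrix b b.dualBasis B).det = D := by rw [hA, ← hD]
    let σ : Equiv.Perm (Fin k) :=
      Equiv.ofBijective snf.f ((Finite.injective_iff_bijective).mp snf.f.injective)
    have hσ : ∀ j, σ j = snf.f j := fun j => rfl
    let τ : Equiv.Perm (Fin k) := σ.symm
    have hP : LinearMap.toMatrix e snf.bM B
        = (τ.permMatrix (Polynomial ℂ)) * Matrix.diagonal snf.a := by
      refine Matrix.ext fun i j => ?_
      rw [LinearMap.toMatrix_apply, he j, map_smul, Finsupp.smul_apply, smul_eq_mul,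
        Module.Basis.repr_self, Matrix.mul_diagonal]
      simp only [τ, Equiv.Perm.permMatrix, PEquiv.toMatrix_apply, Equiv.toPEquiv_apply,
        Finsupp.single_apply]
      simp only [Option.mem_def, Option.some_inj]
      by_cases hij : snf.f j = i
      · rw [if_pos hij, if_pos (by rw [← hij, ← hσ j, Equiv.symm_apply_apply]), mul_one, one_mul]
      · rw [if_neg hij, if_neg (fun hcon => hij (by rw [← hσ j, ← hcon, Equiv.apply_symm_apply])),
          mul_zero, zero_mul]
    have hcomp : LinearMap.toMatrix b b.dualBasis B
        = LinearMap.toMatrix snf.bM b.dualBasis LinearMap.id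
          * (LinearMap.toMatrix e snf.bM B * LinearMap.toMatrix b e LinearMap.id) := by
      rw [← LinearMap.toMatrix_comp b e snf.bM B LinearMap.id, LinearMap.comp_id,
        ← LinearMap.toMatrix_comp b snf.bM b.dualBasis LinearMap.id B, LinearMap.id_comp]
    have hu1 : (LinearMap.toMatrix snf.bM b.dualBasis (LinearMap.id)).det
        * (LinearMap.toMatrix b.dualBasis snf.bM (LinearMap.id)).det = 1 := by
      rw [← Matrix.det_mul,
        ← LinearMap.toMatrix_comp b.dualBasis snf.bM b.dualBasis LinearMap.id LinearMap.id,
        LinearMap.id_comp, LinearMap.toMatrix_id, Matrix.det_one]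
    have hu2 : (LinearMap.toMatrix b e (LinearMap.id)).det
        * (LinearMap.toMatrix e b (LinearMap.id)).det = 1 := by
      rw [← Matrix.det_mul, ← LinearMap.toMatrix_comp e b e LinearMap.id LinearMap.id,
        LinearMap.id_comp, LinearMap.toMatrix_id, Matrix.det_one]
    have hsgn : ((τ.permMatrix (Polynomial ℂ)).det)
        * ((τ.permMatrix (Polynomial ℂ)).det) = 1 := by
      rw [Matrix.det_permutation]
      rcases Int.units_eq_one_or (Equiv.Perm.sign τ) with h | h <;> rw [h] <;> norm_num
    have hDfact : D = (LinearMap.toMatrix snf.bM b.dualBasis LinearMap.id).det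
        * ((τ.permMatrix (Polynomial ℂ)).det * (∏ j, snf.a j)
          * (LinearMap.toMatrix b e LinearMap.id).det) := by
      rw [← hdetA, hcomp, Matrix.det_mul, Matrix.det_mul, hP, Matrix.det_mul,
        Matrix.det_diagonal]
    have hn1 : (LinearMap.toMatrix snf.bM b.dualBasis LinearMap.id).det ≠ 0 :=
      left_ne_zero_of_mul_eq_one hu1
    have hn2 : (LinearMap.toMatrix b e LinearMap.id).det ≠ 0 :=
      left_ne_zero_of_mul_eq_one hu2
    have hnσ : ((τ.permMatrix (Polynomial ℂ)).det) ≠ 0 :=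
      left_ne_zero_of_mul_eq_one hsgn
    have hnprod : (∏ j, snf.a j) ≠ 0 := Finset.prod_ne_zero_iff.mpr fun j _ => ha j
    rw [hDfact, Polynomial.rootMultiplicity_mul
        (by rw [← hDfact]; exact hD0),
      Polynomial.rootMultiplicity_mul (mul_ne_zero (mul_ne_zero hnσ hnprod) hn2),
      Polynomial.rootMultiplicity_mul (mul_ne_zero hnσ hnprod),
      aux_rm_unit hu1, aux_rm_unit hsgn, aux_rm_unit hu2,
      aux_rm_prod Finset.univ snf.a (fun j _ => ha j)]
    simp
  -- final counting
  set v : Fin k → ℕ := fun j => (snf.a j).rootMultiplicity 0 with hv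
  have hfilter : ∀ s : ℕ, (Finset.univ.filter fun j => X ^ s ∣ snf.a j)
      = (Finset.univ.filter fun j => s ≤ v j) := by
    intro s
    apply Finset.filter_congr
    intro j _
    exact aux_X_pow_dvd_iff (ha j) s
  set N : ℕ := (∑ j, v j) + 1 with hN
  have hvN : ∀ j, v j < N := by
    intro j
    have := Finset.single_le_sum (f := v) (fun i _ => Nat.zero_le _) (Finset.mem_univ j)
    omega
  have hsupp : (Function.support fun i : ℕ =>
      Module.finrank ℂ (Submodule.map tM.mkQ (jantzenStep B (i + 1)))) ⊆ Finset.range N := by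
    intro i hi
    simp only [Function.mem_support] at hi
    rw [hstep (i + 1), hfilter (i + 1)] at hi
    have hex : ∃ j, i + 1 ≤ v j := by
      by_contra hc
      push_neg at hc
      apply hi
      rw [Finset.filter_false_of_mem (fun j _ => by
        simp only [not_le]
        exact hc j)]
      rfl
    obtain ⟨j, hj⟩ := hex
    simp only [Finset.coe_range, Set.mem_Iio]
    exact Nat.lt_trans (Nat.lt_of_succ_le hj) (hvN j)
  rw [finsum_eq_sum_of_support_subset _ hsupp, hrmD]
  calc ∑ i ∈ Finset.range N, Module.finrank ℂ (Submodule.map tM.mkQ (jantzenStep B (i + 1)))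
      = ∑ i ∈ Finset.range N, (Finset.univ.filter fun j => i + 1 ≤ v j).card := by
        refine Finset.sum_congr rfl fun i _ => ?_
        rw [hstep (i + 1), hfilter (i + 1)]
    _ = ∑ j, v j := aux_count N v hvN
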